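/- Let Γ ⊆ ℚ_{≥0}^C be a submonoid contained in the nonnegative orthant of ℚ^C for a finite set C, equipped with a monoid homomorphism deg : Γ → ℕ_0^m (degree map). Fix d ∈ ℕ_0^m and generators a^(1), …, a^(s) of Γ. Then the Veronese submonoid Γ^(d) = {a ∈ Γ : deg a ∈ ℕ_0 · d} is finitely generated. (It suffices to show that M = ℕ_0^s ∩ ker φ is finitely generated, where φ : ℤ^s → ℤ^m/ℤd sends (n_1,…,n_s) to Σ n_i deg a^(i) mod ℤd.) -/

import Mathlib

/-- A submonoid of `Fin s → ℕ` closed under truncated subtraction of smaller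
elements is finitely generated (via Dickson's lemma). -/
theorem sat_submonoid_fg (s : ℕ) (M : AddSubmonoid (Fin s → ℕ))
    (hsat : ∀ x y, x ∈ M → y ∈ M → x ≤ y → y - x ∈ M) : M.FG := by
  classical
  set T : Set (Fin s → ℕ) :=
    {x | x ∈ M ∧ x ≠ 0 ∧ ∀ z ∈ M, z ≤ x → z = 0 ∨ z = x} with hT
  have hanti : IsAntichain (· ≤ ·) T := by
    intro x hx y hy hne hle
    rcases hy.2.2 x hx.1 hle with h | h
    · exact hx.2.1 h
    · exact hne h
  have hfin : T.Finite := hanti.finite_of_partiallyWellOrderedOn (Set.isPWO_of_wellQuasiOrderedLE T)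
  have hclo : AddSubmonoid.closure T = M := by
    apply le_antisymm
    · rw [AddSubmonoid.closure_le]; exact fun x hx => hx.1
    · intro x hx
      have key : ∀ N (x : Fin s → ℕ), x ∈ M → (∑ i, x i) ≤ N →
          x ∈ AddSubmonoid.closure T := by
        intro N
        induction N with
        | zero =>
          intro x hx hsum
          have hx0 : x = 0 := by
            funext i
            have h := Finset.single_le_sum (f := x) (fun j _ => Nat.zero_le _)
              (Finset.mem_univ i)
            simp only [Pi.zero_apply]
            omega
          rw [hx0]; exact zero_mem _
        | succ N ih =>
          intro x hx hsum
          by_cases hx0 : x = 0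
          · rw [hx0]; exact zero_mem _
          by_cases hxT : x ∈ T
          · exact AddSubmonoid.subset_closure hxT
          · have : ∃ z ∈ M, z ≤ x ∧ z ≠ 0 ∧ z ≠ x := by
              by_contra hcon
              push_neg at hcon
              exact hxT ⟨hx, hx0, fun z hz hle => by
                by_cases h0 : z = 0
                · exact Or.inl h0
                · exact Or.inr (by
                    by_contra hne
                    exact hne ((hcon z hz hle h0)) )⟩
            obtain ⟨z, hzM, hzle, hz0, hzx⟩ := this
            have hxz : x - z ∈ M := hsat z x hzM hx hzle
            have hxeq : z + (x - z) = x := by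
              funext i
              have h : z i ≤ x i := hzle i
              simp only [Pi.add_apply, Pi.sub_apply]
              omega
            -- sum bounds
            have hslt : (∑ i, z i) < ∑ i, x i := by
              obtain ⟨i, hi⟩ : ∃ i, z i < x i := by
                by_contra hcon
                push_neg at hcon
                exact hzx (le_antisymm hzle hcon)
              exact Finset.sum_lt_sum (fun j _ => hzle j) ⟨i, Finset.mem_univ i, hi⟩
            have hslt2 : (∑ i, (x - z) i) < ∑ i, x i := by
              obtain ⟨i, hi⟩ : ∃ i, 0 < z i := by
                by_contra hcon
                push_neg at hcon
                exact hz0 (funext fun i => Nat.le_antisymm (hcon i) (Nat.zero_le _))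
              refine Finset.sum_lt_sum (fun j _ => ?_) ⟨i, Finset.mem_univ i, ?_⟩
              · exact Nat.sub_le _ _
              · have h : z i ≤ x i := hzle i
                simp only [Pi.sub_apply]
                omega
            have h1 : z ∈ AddSubmonoid.closure T := ih z hzM (by omega)
            have h2 : x - z ∈ AddSubmonoid.closure T := ih (x - z) hxz (by omega)
            rw [← hxeq]; exact add_mem h1 h2
      exact key (∑ i, x i) x hx le_rfl
  exact ⟨hfin.toFinset, by rwa [Set.Finite.coe_toFinset]⟩

/-- Let `Γ` be a finitely generated submonoid of the nonnegative orthant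
`ℚ_{≥0}^C` (`C` a finite set), `deg : ℚ^C → ℚ^m` a linear map mapping `Γ` into `ℕ_0^m`,
and `d ∈ ℕ_0^m`.  Then the Veronese submonoid
`Γ^(d) = {a ∈ Γ : deg a ∈ ℕ_0 · d}` is finitely generated. -/
theorem veronese_submonoid_fg (C : Type*) [Fintype C] (m : ℕ)
    (Γ : AddSubmonoid (C → ℚ)) (hΓfg : Γ.FG)
    (hΓpos : ∀ a ∈ Γ, ∀ c : C, 0 ≤ a c)
    (deg : (C → ℚ) →ₗ[ℚ] (Fin m → ℚ))
    (hdegℕ : ∀ a ∈ Γ, ∀ i : Fin m, ∃ k : ℕ, deg a i = k)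
    (d : Fin m → ℕ) :
    (Γ ⊓ AddSubmonoid.comap deg.toAddMonoidHom
        (AddSubmonoid.closure {fun i : Fin m => (d i : ℚ)})).FG := by
  classical
  obtain ⟨S, hS⟩ := hΓfg
  set dQ : Fin m → ℚ := fun i => (d i : ℚ) with hdQ
  -- enumerate the generators
  set a : Fin S.card → (C → ℚ) := fun i => (S.equivFin.symm i : C → ℚ) with ha
  have hrange : Set.range a = ↑S := by
    ext x
    constructor
    · rintro ⟨i, rfl⟩; exact (S.equivFin.symm i).2
    · intro hx; exact ⟨S.equivFin ⟨x, hx⟩, by simp [ha]⟩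
  have haΓ : ∀ i, a i ∈ Γ := by
    intro i
    rw [← hS]
    exact AddSubmonoid.subset_closure (S.equivFin.symm i).2
  -- natural degree vectors of the generators
  set b : Fin S.card → Fin m → ℕ := fun i j => (hdegℕ (a i) (haΓ i) j).choose with hbdef
  have hb : ∀ i j, deg (a i) j = (b i j : ℚ) := fun i j => (hdegℕ (a i) (haΓ i) j).choose_spec
  -- the evaluation homomorphism ℕ^s → ℚ^C
  set ψ : (Fin S.card → ℕ) →+ (C → ℚ) :=
    { toFun := fun n => ∑ i, (n i : ℚ) • a i
      map_zero' := by simp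
      map_add' := by
        intro n n'
        simp only [Pi.add_apply, Nat.cast_add, add_smul]
        exact Finset.sum_add_distrib } with hψ
  -- the solution monoid M
  set M : AddSubmonoid (Fin S.card → ℕ) :=
    { carrier := {n | ∃ k : ℕ, (∑ i, n i • b i) = k • d}
      zero_mem' := ⟨0, by simp⟩
      add_mem' := by
        rintro n n' ⟨k, hk⟩ ⟨k', hk'⟩
        refine ⟨k + k', ?_⟩
        simp only [Pi.add_apply, add_smul]
        rw [Finset.sum_add_distrib, hk, hk', ← add_smul] } with hM
  have hmemM : ∀ n : Fin S.card → ℕ, n ∈ M ↔ ∃ k : ℕ, (∑ i, n i • b i) = k • d := by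
    intro n; rfl
  -- saturation of M
  have hsat : ∀ x y, x ∈ M → y ∈ M → x ≤ y → y - x ∈ M := by
    intro x y hxM hyM hle
    obtain ⟨k, hk⟩ := hxM
    obtain ⟨k', hk'⟩ := hyM
    have hsplit : (∑ i, (y - x) i • b i) + ∑ i, x i • b i = k' • d := by
      rw [← Finset.sum_add_distrib, ← hk']
      refine Finset.sum_congr rfl fun i _ => ?_
      rw [← add_smul]
      congr 1
      have h : x i ≤ y i := hle i
      simp only [Pi.sub_apply]
      omega
    rw [hk] at hsplit
    by_cases hkk : k ≤ k'
    · refine (hmemM _).2 ⟨k' - k, ?_⟩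
      have h2 : (k' - k) • d + k • d = k' • d := by
        rw [← add_smul, Nat.sub_add_cancel hkk]
      exact add_right_cancel (hsplit.trans h2.symm)
    · have hle1 : k • d ≤ k' • d := hsplit ▸ le_add_self
      have hle2 : k' • d ≤ k • d := by
        intro j
        simp only [Pi.smul_apply, smul_eq_mul]
        exact Nat.mul_le_mul_right _ (le_of_not_ge hkk)
      have heq : k • d = k' • d := le_antisymm hle1 hle2
      refine (hmemM _).2 ⟨0, ?_⟩
      rw [zero_smul]
      have : (∑ i, (y - x) i • b i) + k • d = 0 + k • d := by
        rw [hsplit, heq, zero_add]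
      exact add_right_cancel this
  have hMfg : M.FG := sat_submonoid_fg _ M hsat
  -- degree of ψ n
  have hdeg : ∀ (n : Fin S.card → ℕ) (j : Fin m),
      deg (ψ n) j = (((∑ i, n i • b i) j : ℕ) : ℚ) := by
    intro n j
    have h1 : deg (ψ n) = ∑ i, (n i : ℚ) • deg (a i) := by
      show deg (∑ i, (n i : ℚ) • a i) = _
      rw [map_sum]
      exact Finset.sum_congr rfl fun i _ => by rw [map_smul]
    rw [h1]
    simp only [Finset.sum_apply, Pi.smul_apply, smul_eq_mul, hb]
    push_cast
    rfl
  -- M maps onto the Veronese submonoid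
  suffices hsuff : Γ ⊓ AddSubmonoid.comap deg.toAddMonoidHom
      (AddSubmonoid.closure {dQ}) = M.map ψ by
    rw [hsuff]
    exact hMfg.map ψ
  have hsurj : ∀ y ∈ AddSubmonoid.closure (Set.range a), ∃ n, ψ n = y := by
    intro y hy
    induction hy using AddSubmonoid.closure_induction with
    | mem y hy =>
      obtain ⟨i, rfl⟩ := hy
      refine ⟨Pi.single i 1, ?_⟩
      show (∑ j, ((Pi.single i 1 : Fin S.card → ℕ) j : ℚ) • a j) = a i
      rw [Finset.sum_eq_single i]
      · simp
      · intro j _ hj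
        simp [Pi.single_apply, hj]
      · simp
    | zero => exact ⟨0, map_zero ψ⟩
    | add y z _ _ ihy ihz =>
      obtain ⟨n, rfl⟩ := ihy
      obtain ⟨n', rfl⟩ := ihz
      exact ⟨n + n', map_add ψ n n'⟩
  apply le_antisymm
  · rintro x ⟨hxΓ, hxc⟩
    have hx' : x ∈ AddSubmonoid.closure (Set.range a) := by
      rw [hrange, hS]; exact hxΓ
    obtain ⟨n, rfl⟩ := hsurj x hx'
    obtain ⟨k, hk⟩ := AddSubmonoid.mem_closure_singleton.1 hxc
    refine AddSubmonoid.mem_map.2 ⟨n, (hmemM n).2 ⟨k, ?_⟩, rfl⟩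
    funext j
    have h := congrFun hk j
    simp only [Pi.smul_apply, hdQ, smul_eq_mul, LinearMap.toAddMonoidHom_coe] at h
    have h2 := hdeg n j
    rw [← h] at h2
    have : (((∑ i, n i • b i) j : ℕ) : ℚ) = ((k * d j : ℕ) : ℚ) := by
      rw [← h2]; push_cast; ring
    have h3 : (∑ i, n i • b i) j = k * d j := Nat.cast_injective this
    simpa using h3
  · rintro x ⟨n, hnM, rfl⟩
    obtain ⟨k, hk⟩ := (hmemM n).1 hnM
    constructor
    · show (∑ i, (n i : ℚ) • a i) ∈ Γ
      refine AddSubmonoid.sum_mem Γ fun i _ => ?_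
      rw [show ((n i : ℚ)) • a i = n i • a i from (Nat.cast_smul_eq_nsmul ℚ _ _)]
      exact AddSubmonoid.nsmul_mem Γ (haΓ i) (n i)
    · refine AddSubmonoid.mem_closure_singleton.2 ⟨k, ?_⟩
      funext j
      simp only [LinearMap.toAddMonoidHom_coe, Pi.smul_apply]
      rw [hdeg n j, hk]
      simp [hdQ, mul_comm]
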